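/- arXiv:math/0505085 — 2 statements merged into one kernel-verified Lean document; each statement's English description precedes it below -/
import Mathlib

section
/- Let n ≥ 2 and m ≥ 1. Every face of Δ_B(m,n) that is maximal with respect to inclusion has exactly n elements (i.e., Δ_B(m,n) is pure of dimension n−1). -/
/-- `x` lies strictly inside the open arc from `a` counterclockwise to `b`
in the convex `N`-gon whose vertices are identified with `ZMod N`. -/
def ArcBtw {N : ℕ} (a b x : ZMod N) : Prop :=
  ∃ k : ℕ, 0 < k ∧ k < (b - a).val ∧ x = a + (k : ZMod N)

/-- `p` is a diagonal of the convex `N`-gon: an unordered pair `{a, b}` of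
vertices with `b ∉ {a, a+1, a-1}`. -/
def IsDiagonal {N : ℕ} (p : Sym2 (ZMod N)) : Prop :=
  ∃ a b : ZMod N, p = s(a, b) ∧ b ≠ a ∧ b ≠ a + 1 ∧ b ≠ a - 1

/-- The diagonals `p` and `q` cross: their endpoints interleave in cyclic
order, i.e. exactly one endpoint of one of them lies strictly inside one of
the two open arcs determined by the other. -/
def Crosses {N : ℕ} (p q : Sym2 (ZMod N)) : Prop :=
  ∃ a b c d : ZMod N, p = s(a, b) ∧ q = s(c, d) ∧ ArcBtw a b c ∧ ArcBtw b a d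

/-- The diagonal `p = {a, b}` is `m`-allowable: the number of vertices
strictly between `a` and `b` on each of the two arcs determined by `{a, b}`
is divisible by `m`. -/
def MAllowable {N : ℕ} (m : ℕ) (p : Sym2 (ZMod N)) : Prop :=
  ∃ a b : ZMod N, p = s(a, b) ∧ m ∣ ((b - a).val - 1) ∧ m ∣ ((a - b).val - 1)

/-- A face of the complex `Δ(m, n)` (with `N = (n+1)m+2`): a set of pairwise
noncrossing `m`-allowable diagonals of the convex `N`-gon. -/
def IsFace {N : ℕ} (m : ℕ) (F : Finset (Sym2 (ZMod N))) : Prop :=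
  (∀ p ∈ F, IsDiagonal p ∧ MAllowable m p) ∧ ∀ p ∈ F, ∀ q ∈ F, ¬ Crosses p q

/-- The antipodal map of the convex `(2nm+2)`-gon, `a ↦ a + nm + 1`. -/
def antipode (n m : ℕ) : ZMod (2 * n * m + 2) → ZMod (2 * n * m + 2) :=
  fun a => a + ((n * m + 1 : ℕ) : ZMod (2 * n * m + 2))

/-- `p` is a diameter of the convex `(2nm+2)`-gon: a diagonal of the form `{a, σ(a)}`. -/
def IsDiameter (n m : ℕ) (p : Sym2 (ZMod (2 * n * m + 2))) : Prop :=
  ∃ a : ZMod (2 * n * m + 2), p = s(a, antipode n m a)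

/-- A vertex of the simplicial complex `Δ_B(m, n)`: either a diameter, or an
unordered pair `{D, σ(D)}` where `D` is an `m`-allowable diagonal that is not
a diameter. -/
def IsBVertex (n m : ℕ) (v : Finset (Sym2 (ZMod (2 * n * m + 2)))) : Prop :=
  (∃ p, IsDiameter n m p ∧ v = {p}) ∨
  (∃ p, IsDiagonal p ∧ MAllowable m p ∧ ¬ IsDiameter n m p ∧
    v = {p, Sym2.map (antipode n m) p})

/-- Two vertices of `Δ_B(m, n)` are compatible if no diagonal representing one
of them crosses a diagonal representing the other. -/
def BCompat (n m : ℕ) (v w : Finset (Sym2 (ZMod (2 * n * m + 2)))) : Prop :=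
  ∀ p ∈ v, ∀ q ∈ w, ¬ Crosses p q

/-- A face of `Δ_B(m, n)`: a set of pairwise compatible vertices. -/
def IsBFace (n m : ℕ) (F : Finset (Finset (Sym2 (ZMod (2 * n * m + 2))))) : Prop :=
  (∀ v ∈ F, IsBVertex n m v) ∧ ∀ v ∈ F, ∀ w ∈ F, v ≠ w → BCompat n m v w

def IChord (m L : ℕ) (c : ℕ × ℕ) : Prop := 2 ≤ c.2 - c.1 ∧ c.2 ≤ L ∧ m ∣ (c.2 - c.1 - 1)

def ICross (c d : ℕ × ℕ) : Prop :=
  (c.1 < d.1 ∧ d.1 < c.2 ∧ c.2 < d.2) ∨ (d.1 < c.1 ∧ c.1 < d.2 ∧ d.2 < c.2)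

def IMax (m L : ℕ) (T : Finset (ℕ × ℕ)) : Prop :=
  (∀ c ∈ T, IChord m L c) ∧ (∀ c ∈ T, ∀ d ∈ T, ¬ ICross c d) ∧ (0, L) ∈ T ∧
  ∀ c, IChord m L c → c ∉ T → ∃ d ∈ T, ICross c d

def fc (i m x : ℕ) : ℕ := if x ≤ i then x else x - m
def gc (i m x : ℕ) : ℕ := if x ≤ i then x else x + m

lemma prod_ne_iff (p q : ℕ × ℕ) : p ≠ q ↔ (p.1 ≠ q.1 ∨ p.2 ≠ q.2) := by
  rw [Ne, Prod.ext_iff]; tauto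

theorem imax_card (m : ℕ) (hm : 0 < m) : ∀ L, 2 ≤ L → m ∣ (L - 1) →
    ∀ T : Finset (ℕ × ℕ), IMax m L T → T.card * m = L - 1 := by
  intro L
  induction L using Nat.strong_induction_on with
  | _ L IH =>
  intro hL2 hLd T hT
  obtain ⟨hch, hcr, hfull, hmaxl⟩ := hT
  by_cases hA : ∀ c ∈ T, c = (0, L)
  · have hTeq : T = {(0,L)} := Finset.eq_singleton_iff_unique_mem.mpr ⟨hfull, hA⟩
    have hLm : L = m + 1 := by
      by_contra hne
      obtain ⟨q, hq⟩ := hLd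
      have hL : 2*m + 1 ≤ L := by
        have hq2 : 2 ≤ q := by rcases q with _|_|q <;> omega
        have := Nat.mul_le_mul_left m hq2
        omega
      have hc0 : IChord m L (0, m+1) := ⟨by simp; omega, by omega, by simp⟩
      have hnotin : (0, m+1) ∉ T := by
        intro h; have := hA _ h
        rw [Prod.ext_iff] at this; simp at this; omega
      obtain ⟨d, hd, hcross⟩ := hmaxl _ hc0 hnotin
      have hd' := hA _ hd; subst hd'
      rcases hcross with ⟨h1,-,-⟩|⟨h1,-,-⟩ <;> simp at h1
    subst hLm
    simp [hTeq]
  · push_neg at hA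
    obtain ⟨C0, hC0T, hC0ne⟩ := hA
    obtain ⟨C, hCT0, hCmin⟩ := (T.filter (fun c => c ≠ (0,L))).exists_min_image
      (fun c => c.2 - c.1) ⟨C0, Finset.mem_filter.mpr ⟨hC0T, hC0ne⟩⟩
    rw [Finset.mem_filter] at hCT0
    obtain ⟨hCT, hCne⟩ := hCT0
    have hCne' : C.1 ≠ 0 ∨ C.2 ≠ L := (prod_ne_iff _ _).mp hCne
    obtain ⟨hCij, hCjL, hCdvd⟩ := hch C hCT
    have hinside : ∀ D ∈ T, D ≠ C → (D.1 ≤ C.1 ∨ C.2 ≤ D.1) ∧ (D.2 ≤ C.1 ∨ C.2 ≤ D.2) := by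
      intro D hD hDC
      obtain ⟨hD2, hDL, -⟩ := hch D hD
      have hncr := hcr C hCT D hD
      have hmin : C.2 - C.1 ≤ D.2 - D.1 ∨ (D.1 = 0 ∧ D.2 = L) := by
        by_cases h : D = (0,L)
        · right; rw [Prod.ext_iff] at h; exact ⟨h.1, h.2⟩
        · left; exact hCmin D (Finset.mem_filter.mpr ⟨hD, h⟩)
      have hDC' : D.1 ≠ C.1 ∨ D.2 ≠ C.2 := (prod_ne_iff _ _).mp hDC
      unfold ICross at hncr
      omega
    have hC2 : C.2 = C.1 + m + 1 := by
      by_contra hne2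
      obtain ⟨q, hq⟩ := hCdvd
      have hlen : 2*m + 1 ≤ C.2 - C.1 := by
        have hq2 : 2 ≤ q := by rcases q with _|_|q <;> omega
        have := Nat.mul_le_mul_left m hq2
        omega
      have hc0 : IChord m L (C.1, C.1 + (m+1)) := ⟨by simp; omega, by omega, by simp⟩
      have hnotin : (C.1, C.1 + (m+1)) ∉ T := by
        intro h
        have hne3 : (C.1, C.1 + (m+1)) ≠ C := by
          rw [prod_ne_iff]; simp; omega
        have := hinside _ h hne3
        simp at this; omega
      obtain ⟨d, hd, hcross⟩ := hmaxl _ hc0 hnotin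
      by_cases hdC : d = C
      · subst hdC; unfold ICross at hcross; simp at hcross
      · have := hinside d hd hdC
        unfold ICross at hcross; simp at hcross; omega
    -- contraction
    set φ : ℕ × ℕ → ℕ × ℕ := fun d => (fc C.1 m d.1, fc C.1 m d.2) with hφ_def
    set T' : Finset (ℕ × ℕ) := (T.erase C).image φ with hT'_def
    have hgood : ∀ D ∈ T.erase C, (D.1 ≤ C.1 ∨ C.2 ≤ D.1) ∧ (D.2 ≤ C.1 ∨ C.2 ≤ D.2) := by
      intro D hD
      exact hinside D (Finset.mem_of_mem_erase hD) (Finset.ne_of_mem_erase hD)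
    have hfmono : ∀ x y : ℕ, (x ≤ C.1 ∨ C.2 ≤ x) → (y ≤ C.1 ∨ C.2 ≤ y) →
        (fc C.1 m x < fc C.1 m y ↔ x < y) := by
      intro x y hx hy
      simp only [fc]
      split_ifs <;> omega
    have hL2' : m + 2 ≤ L := by omega
    have hLm2 : 2 ≤ L - m := by omega
    have hT'ch : ∀ c ∈ T', IChord m (L - m) c := by
      intro c hc
      obtain ⟨D, hD, rfl⟩ := Finset.mem_image.mp hc
      obtain ⟨hg1, hg2⟩ := hgood D hD
      obtain ⟨hD2, hDL, hDdvd⟩ := hch D (Finset.mem_of_mem_erase hD)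
      have hDC' : D.1 ≠ C.1 ∨ D.2 ≠ C.2 := (prod_ne_iff _ _).mp (Finset.ne_of_mem_erase hD)
      have hsub : fc C.1 m D.2 - fc C.1 m D.1 = D.2 - D.1 ∨
          (fc C.1 m D.2 - fc C.1 m D.1 = D.2 - D.1 - m ∧ m + 2 ≤ D.2 - D.1) := by
        simp only [fc]; split_ifs <;> omega
      refine ⟨?_, ?_, ?_⟩
      · show 2 ≤ fc C.1 m D.2 - fc C.1 m D.1
        rcases hsub with h|⟨h,h'⟩ <;> omega
      · show fc C.1 m D.2 ≤ L - m
        simp only [fc]; split_ifs <;> omega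
      · show m ∣ fc C.1 m D.2 - fc C.1 m D.1 - 1
        rcases hsub with h|⟨h,h'⟩
        · rw [h]; exact hDdvd
        · have he : fc C.1 m D.2 - fc C.1 m D.1 - 1 = (D.2 - D.1 - 1) - m := by omega
          rw [he]; exact Nat.dvd_sub hDdvd (dvd_refl m)
    have hT'cr : ∀ c ∈ T', ∀ d ∈ T', ¬ ICross c d := by
      intro c hc d hd hcross
      obtain ⟨D, hD, rfl⟩ := Finset.mem_image.mp hc
      obtain ⟨E, hE, rfl⟩ := Finset.mem_image.mp hd
      obtain ⟨hgD1, hgD2⟩ := hgood D hD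
      obtain ⟨hgE1, hgE2⟩ := hgood E hE
      apply hcr D (Finset.mem_of_mem_erase hD) E (Finset.mem_of_mem_erase hE)
      unfold ICross at hcross ⊢
      rcases hcross with ⟨h1,h2,h3⟩|⟨h1,h2,h3⟩
      · exact Or.inl ⟨(hfmono _ _ hgD1 hgE1).mp h1, (hfmono _ _ hgE1 hgD2).mp h2,
          (hfmono _ _ hgD2 hgE2).mp h3⟩
      · exact Or.inr ⟨(hfmono _ _ hgE1 hgD1).mp h1, (hfmono _ _ hgD1 hgE2).mp h2,
          (hfmono _ _ hgE2 hgD2).mp h3⟩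
    have hT'full : (0, L - m) ∈ T' := by
      apply Finset.mem_image.mpr
      refine ⟨(0, L), Finset.mem_erase.mpr ⟨fun h => hCne h.symm, hfull⟩, ?_⟩
      simp only [hφ_def, fc]
      have h1 : (0:ℕ) ≤ C.1 := Nat.zero_le _
      have h2 : ¬ (L ≤ C.1) := by omega
      simp [h1, h2]
    have hT'max : ∀ c, IChord m (L - m) c → c ∉ T' → ∃ d ∈ T', ICross c d := by
      intro c hcch hcnin
      obtain ⟨hc2, hcL, hcdvd⟩ := hcch
      have hgrange : ∀ x, gc C.1 m x ≤ C.1 ∨ C.2 ≤ gc C.1 m x := by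
        intro x; simp only [gc]; split_ifs <;> omega
      have hgf : ∀ x, x ≤ L - m → fc C.1 m (gc C.1 m x) = x := by
        intro x hx; simp only [fc, gc]; split_ifs <;> omega
      have hgsub : gc C.1 m c.2 - gc C.1 m c.1 = c.2 - c.1 ∨
          gc C.1 m c.2 - gc C.1 m c.1 = c.2 - c.1 + m := by
        simp only [gc]; split_ifs <;> omega
      have hC''ch : IChord m L (gc C.1 m c.1, gc C.1 m c.2) := by
        refine ⟨?_, ?_, ?_⟩
        · show 2 ≤ gc C.1 m c.2 - gc C.1 m c.1
          rcases hgsub with h|h <;> omega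
        · show gc C.1 m c.2 ≤ L
          simp only [gc]; split_ifs <;> omega
        · show m ∣ gc C.1 m c.2 - gc C.1 m c.1 - 1
          rcases hgsub with h|h
          · rw [h]; exact hcdvd
          · have he : gc C.1 m c.2 - gc C.1 m c.1 - 1 = (c.2 - c.1 - 1) + m := by omega
            rw [he]; exact dvd_add hcdvd (dvd_refl m)
      have hC''nin : (gc C.1 m c.1, gc C.1 m c.2) ∉ T := by
        intro hC''T
        by_cases hCC : (gc C.1 m c.1, gc C.1 m c.2) = C
        · rw [Prod.ext_iff] at hCC
          obtain ⟨h1, h2⟩ := hCC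
          simp only [gc] at h1 h2
          split_ifs at h1 h2 <;> omega
        · apply hcnin
          apply Finset.mem_image.mpr
          refine ⟨_, Finset.mem_erase.mpr ⟨hCC, hC''T⟩, ?_⟩
          simp only [hφ_def]
          rw [hgf c.1 (by omega), hgf c.2 (by omega)]
      obtain ⟨d, hdT, hcross⟩ := hmaxl _ hC''ch hC''nin
      have hdC : d ≠ C := by
        intro h; subst h
        have h1 := hgrange c.1
        have h2 := hgrange c.2
        unfold ICross at hcross
        dsimp only at hcross
        omega
      have hgd := hinside d hdT hdC
      refine ⟨φ d, Finset.mem_image.mpr ⟨d, Finset.mem_erase.mpr ⟨hdC, hdT⟩, rfl⟩, ?_⟩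
      have hc1 : c.1 = fc C.1 m (gc C.1 m c.1) := (hgf c.1 (by omega)).symm
      have hc2' : c.2 = fc C.1 m (gc C.1 m c.2) := (hgf c.2 (by omega)).symm
      unfold ICross at hcross ⊢
      dsimp only at hcross
      simp only [hφ_def]
      rw [hc1, hc2']
      rcases hcross with ⟨h1,h2,h3⟩|⟨h1,h2,h3⟩
      · exact Or.inl ⟨(hfmono _ _ (hgrange c.1) hgd.1).mpr h1,
          (hfmono _ _ hgd.1 (hgrange c.2)).mpr h2,
          (hfmono _ _ (hgrange c.2) hgd.2).mpr h3⟩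
      · exact Or.inr ⟨(hfmono _ _ hgd.1 (hgrange c.1)).mpr h1,
          (hfmono _ _ (hgrange c.1) hgd.2).mpr h2,
          (hfmono _ _ hgd.2 (hgrange c.2)).mpr h3⟩
    have hcard : T'.card = T.card - 1 := by
      rw [hT'_def, Finset.card_image_of_injOn, Finset.card_erase_of_mem hCT]
      intro D hD E hE hDE
      simp only [Finset.mem_coe] at hD hE
      obtain ⟨hgD1, hgD2⟩ := hgood D hD
      obtain ⟨hgE1, hgE2⟩ := hgood E hE
      rw [Prod.ext_iff] at hDE ⊢
      simp only [hφ_def] at hDE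
      have e1 := hfmono D.1 E.1 hgD1 hgE1
      have e2 := hfmono E.1 D.1 hgE1 hgD1
      have e3 := hfmono D.2 E.2 hgD2 hgE2
      have e4 := hfmono E.2 D.2 hgE2 hgD2
      obtain ⟨hDE1, hDE2⟩ := hDE
      constructor <;> omega
    have hIH := IH (L - m) (by omega) hLm2
      (by
        have he : L - m - 1 = (L - 1) - m := by omega
        rw [he]; exact Nat.dvd_sub hLd (dvd_refl m))
      T' ⟨hT'ch, hT'cr, hT'full, hT'max⟩
    rw [hcard] at hIH
    have hT1 : 1 ≤ T.card := Finset.card_pos.mpr ⟨_, hfull⟩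
    have hmul : T.card * m = (T.card - 1) * m + m := by
      have h : T.card - 1 + 1 = T.card := by omega
      calc T.card * m = (T.card - 1 + 1) * m := by rw [h]
        _ = (T.card - 1) * m + m := by rw [Nat.succ_mul]
    omega

section Poly
variable {N : ℕ} [NeZero N]

lemma zmod_decomp (x a : ZMod N) : x = a + ((x - a).val : ZMod N) := by
  rw [ZMod.natCast_rightInverse (x - a)]; ring

lemma arcBtw_iff (a b x : ZMod N) :
    ArcBtw a b x ↔ 0 < (x - a).val ∧ (x - a).val < (b - a).val := by
  constructor
  · rintro ⟨k, hk0, hk, rfl⟩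
    have hkN : k < N := lt_trans hk (ZMod.val_lt _)
    have he : (a + (k:ZMod N) - a : ZMod N) = (k : ZMod N) := by ring
    rw [he, ZMod.val_cast_of_lt hkN]
    exact ⟨hk0, hk⟩
  · rintro ⟨h0, h1⟩
    exact ⟨(x - a).val, h0, h1, zmod_decomp x a⟩

lemma crosses_iff (a b c d : ZMod N) :
    Crosses s(a,b) s(c,d) ↔
      ((ArcBtw a b c ∧ ArcBtw b a d) ∨ (ArcBtw a b d ∧ ArcBtw b a c)) := by
  constructor
  · rintro ⟨a', b', c', d', hp, hq, h1, h2⟩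
    rw [Sym2.eq_iff] at hp hq
    rcases hp with ⟨rfl, rfl⟩|⟨rfl, rfl⟩ <;> rcases hq with ⟨rfl,rfl⟩|⟨rfl,rfl⟩ <;> tauto
  · rintro (⟨h1,h2⟩|⟨h1,h2⟩)
    · exact ⟨a, b, c, d, rfl, rfl, h1, h2⟩
    · exact ⟨a, b, d, c, rfl, Sym2.eq_swap, h1, h2⟩

lemma no_self_cross (p : Sym2 (ZMod N)) : ¬ Crosses p p := by
  rintro ⟨a, b, c, d, hp, hq, h1, h2⟩
  rw [arcBtw_iff] at h1 h2
  rw [hp, Sym2.eq_iff] at hq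
  rcases hq with ⟨rfl, rfl⟩|⟨rfl, rfl⟩
  · simp at h1
  · exact absurd h1.2 (lt_irrefl _)

lemma arcBtw_translate (c a b x : ZMod N) : ArcBtw (a+c) (b+c) (x+c) ↔ ArcBtw a b x := by
  unfold ArcBtw
  constructor <;> rintro ⟨k, h0, h1, h2⟩
  · exact ⟨k, h0, by simpa using h1, by linear_combination h2⟩
  · exact ⟨k, h0, by simpa using h1, by linear_combination h2⟩

lemma crosses_translate (c : ZMod N) (p q : Sym2 (ZMod N)) :
    Crosses (Sym2.map (· + c) p) (Sym2.map (· + c) q) ↔ Crosses p q := by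
  refine Sym2.inductionOn₂ p q ?_
  intro x y z w
  rw [Sym2.map_pair_eq, Sym2.map_pair_eq, crosses_iff, crosses_iff,
    arcBtw_translate, arcBtw_translate, arcBtw_translate, arcBtw_translate]

lemma crosses_symm {p q : Sym2 (ZMod N)} (h : Crosses p q) : Crosses q p := by
  obtain ⟨a, b, c, d, rfl, rfl, h1, h2⟩ := h
  rw [arcBtw_iff] at h1 h2
  obtain ⟨h1a, h1b⟩ := h1
  obtain ⟨h2a, h2b⟩ := h2
  set s := (c - a).val with hs
  set D0 := (b - a).val with hD0
  set t := (d - b).val with ht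
  have hNpos : 0 < N := Nat.pos_of_ne_zero (NeZero.ne N)
  have hD0N : D0 < N := ZMod.val_lt _
  have hba : b - a ≠ 0 := by
    intro h0; rw [hD0, h0, ZMod.val_zero] at h1b; omega
  have hab : (a - b).val = N - D0 := by
    have : a - b = -(b - a) := by ring
    rw [this, ZMod.neg_val, if_neg hba, hD0]
  rw [hab] at h2b
  have hb' : b = a + (D0 : ZMod N) := zmod_decomp b a
  have hc' : c = a + (s : ZMod N) := zmod_decomp c a
  have e0 : d = b + (t : ZMod N) := by rw [ht]; exact zmod_decomp d b
  have hd' : d = a + ((D0 : ZMod N) + (t : ZMod N)) := by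
    rw [e0, hb']; ring
  have hsD0 : s ≤ D0 := le_of_lt h1b
  have htD0N : D0 + t < N := by omega
  have ebc : (b - c).val = D0 - s := by
    have e : b - c = ((D0 - s : ℕ) : ZMod N) := by
      rw [hb', hc', Nat.cast_sub hsD0]; ring
    rw [e, ZMod.val_cast_of_lt (by omega)]
  have edc : (d - c).val = D0 + t - s := by
    have e : d - c = ((D0 + t - s : ℕ) : ZMod N) := by
      rw [hd', hc', Nat.cast_sub (by omega : s ≤ D0 + t)]; push_cast; ring
    rw [e, ZMod.val_cast_of_lt (by omega)]
  have ead : (a - d).val = N - (D0 + t) := by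
    have e : a - d = ((N - (D0 + t) : ℕ) : ZMod N) := by
      rw [hd', Nat.cast_sub (by omega : D0 + t ≤ N), ZMod.natCast_self]
      push_cast; ring
    rw [e, ZMod.val_cast_of_lt (by omega)]
  have ecd : (c - d).val = N - (D0 + t - s) := by
    have e : c - d = ((N - (D0 + t - s) : ℕ) : ZMod N) := by
      rw [hc', hd', Nat.cast_sub (by omega : D0 + t - s ≤ N), ZMod.natCast_self,
        Nat.cast_sub (by omega : s ≤ D0 + t)]
      push_cast; ring
    rw [e, ZMod.val_cast_of_lt (by omega)]
  rw [crosses_iff]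
  right
  constructor
  · rw [arcBtw_iff, ebc, edc]; omega
  · rw [arcBtw_iff, ead, ecd]; omega

def dN (Nn i u : ℕ) : ℕ := if i ≤ u then u - i else Nn + u - i

lemma val_shift (a : ZMod N) (u i : ℕ) (hu : u < N) (hi : i < N) :
    ((a + (u:ZMod N)) - (a + (i:ZMod N))).val = dN N i u := by
  unfold dN
  split_ifs with h
  · have e : (a + (u:ZMod N)) - (a + (i:ZMod N)) = ((u - i : ℕ) : ZMod N) := by
      rw [Nat.cast_sub h]; ring
    rw [e, ZMod.val_cast_of_lt (by omega)]
  · have e : (a + (u:ZMod N)) - (a + (i:ZMod N)) = ((N + u - i : ℕ) : ZMod N) := by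
      rw [Nat.cast_sub (by omega : i ≤ N + u), Nat.cast_add, ZMod.natCast_self]; ring
    rw [e, ZMod.val_cast_of_lt (by omega)]

lemma crosses_coord (a : ZMod N) {i j u v : ℕ} (hij : i < j) (hjN : j < N)
    (huv : u < v) (hvN : v < N) :
    Crosses s(a + (i:ZMod N), a + (j:ZMod N)) s(a + (u:ZMod N), a + (v:ZMod N)) ↔
      ((i < u ∧ u < j ∧ j < v) ∨ (u < i ∧ i < v ∧ v < j)) := by
  rw [crosses_iff, arcBtw_iff, arcBtw_iff, arcBtw_iff, arcBtw_iff,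
    val_shift a u i (by omega) (by omega), val_shift a j i (by omega) (by omega),
    val_shift a v j (by omega) (by omega), val_shift a i j (by omega) (by omega),
    val_shift a v i (by omega) (by omega), val_shift a u j (by omega) (by omega)]
  unfold dN
  split_ifs <;> omega


lemma cast_nat_inj {u v : ℕ} (hu : u < N) (hv : v < N) (h : (u : ZMod N) = v) : u = v := by
  have := congrArg ZMod.val h
  rwa [ZMod.val_cast_of_lt hu, ZMod.val_cast_of_lt hv] at this

lemma diag_conditions {p : Sym2 (ZMod N)} (h : IsDiagonal p) {z w : ZMod N}
    (he : p = s(z, w)) : w ≠ z ∧ w ≠ z + 1 ∧ z ≠ w + 1 := by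
  obtain ⟨a, b, rfl, h1, h2, h3⟩ := h
  rw [Sym2.eq_iff] at he
  rcases he with ⟨rfl, rfl⟩|⟨rfl, rfl⟩
  · exact ⟨h1, h2, fun hz => h3 (by linear_combination -hz)⟩
  · exact ⟨fun hz => h1 hz.symm, fun hz => h3 (by linear_combination -hz), h2⟩

lemma allow_conditions {m' : ℕ} {p : Sym2 (ZMod N)} (h : MAllowable m' p) {z w : ZMod N}
    (he : p = s(z, w)) : m' ∣ ((w - z).val - 1) ∧ m' ∣ ((z - w).val - 1) := by
  obtain ⟨a, b, rfl, h1, h2⟩ := h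
  rw [Sym2.eq_iff] at he
  rcases he with ⟨rfl, rfl⟩|⟨rfl, rfl⟩
  · exact ⟨h1, h2⟩
  · exact ⟨h2, h1⟩

end Poly

section BSpec
variable (n m : ℕ)

lemma nm2 (hn : 2 ≤ n) (hm : 1 ≤ m) : 2 ≤ n * m := by
  calc 2 = 2 * 1 := by ring
    _ ≤ n * m := Nat.mul_le_mul hn hm

lemma antipode_apply (a : ZMod (2*n*m+2)) :
    antipode n m a = a + ((n*m+1 : ℕ) : ZMod (2*n*m+2)) := rfl

lemma antipode_antipode (a : ZMod (2*n*m+2)) : antipode n m (antipode n m a) = a := by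
  have h2 : ((2*n*m+2 : ℕ) : ZMod (2*n*m+2)) = 0 := ZMod.natCast_self _
  rw [antipode_apply, antipode_apply]
  have : ((n*m+1 : ℕ) : ZMod (2*n*m+2)) + ((n*m+1 : ℕ) : ZMod (2*n*m+2))
      = ((2*n*m+2 : ℕ) : ZMod (2*n*m+2)) := by push_cast; ring
  rw [add_assoc, this, h2, add_zero]

lemma map_antipode_invol (p : Sym2 (ZMod (2*n*m+2))) :
    Sym2.map (antipode n m) (Sym2.map (antipode n m) p) = p := by
  refine Sym2.inductionOn p ?_
  intro x y
  rw [Sym2.map_pair_eq, Sym2.map_pair_eq, antipode_antipode, antipode_antipode]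

lemma map_antipode_diam {p : Sym2 (ZMod (2*n*m+2))} (hp : IsDiameter n m p) :
    Sym2.map (antipode n m) p = p := by
  obtain ⟨a, rfl⟩ := hp
  rw [Sym2.map_pair_eq, antipode_antipode, Sym2.eq_swap]

lemma diam_sigma_nondiam {p : Sym2 (ZMod (2*n*m+2))} (hp : ¬ IsDiameter n m p) :
    ¬ IsDiameter n m (Sym2.map (antipode n m) p) := by
  intro hd
  apply hp
  have := map_antipode_diam n m hd
  rw [map_antipode_invol] at this
  rw [this]; exact hd

lemma isDiagonal_translate {N : ℕ} (c : ZMod N) {p : Sym2 (ZMod N)} (h : IsDiagonal p) :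
    IsDiagonal (Sym2.map (· + c) p) := by
  obtain ⟨a, b, rfl, h1, h2, h3⟩ := h
  rw [Sym2.map_pair_eq]
  refine ⟨a + c, b + c, rfl, ?_, ?_, ?_⟩
  · intro he; exact h1 (by linear_combination he)
  · intro he; exact h2 (by linear_combination he)
  · intro he; exact h3 (by linear_combination he)

lemma mAllowable_translate {N : ℕ} (m' : ℕ) (c : ZMod N) {p : Sym2 (ZMod N)}
    (h : MAllowable m' p) : MAllowable m' (Sym2.map (· + c) p) := by
  obtain ⟨a, b, rfl, h1, h2⟩ := h
  rw [Sym2.map_pair_eq]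
  refine ⟨a + c, b + c, rfl, ?_, ?_⟩
  · simpa using h1
  · simpa using h2

lemma diam_diag (hn : 2 ≤ n) (hm : 1 ≤ m) {p : Sym2 (ZMod (2*n*m+2))}
    (hp : IsDiameter n m p) : IsDiagonal p ∧ MAllowable m p := by
  haveI : NeZero (2*n*m+2) := ⟨by omega⟩
  have hnm := nm2 n m hn hm
  have hNN : 2*n*m = 2*(n*m) := by ring
  obtain ⟨a, rfl⟩ := hp
  rw [antipode_apply]
  set c : ZMod (2*n*m+2) := ((n*m+1 : ℕ) : ZMod (2*n*m+2)) with hc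
  have hcv : c.val = n*m+1 := ZMod.val_cast_of_lt (by omega)
  have hdiff : a + c - a = c := add_sub_cancel_left a c
  have hc0 : c ≠ 0 := by
    intro h0; rw [h0] at hcv; simp [ZMod.val_zero] at hcv
  constructor
  · refine ⟨a, a + c, rfl, ?_, ?_, ?_⟩
    · intro he
      exact hc0 (by linear_combination he)
    · intro he
      have h1 : c = ((1:ℕ) : ZMod (2*n*m+2)) := by push_cast; linear_combination he
      have := cast_nat_inj (N := 2*n*m+2) (by omega) (by omega) (hc ▸ h1)
      omega
    · intro he
      have hcm : c = -1 := by linear_combination he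
      have h1 : ((n*m+2 : ℕ) : ZMod (2*n*m+2)) = ((0:ℕ) : ZMod (2*n*m+2)) := by
        have h2 : ((n*m+2 : ℕ) : ZMod (2*n*m+2)) = c + 1 := by rw [hc]; push_cast; ring
        rw [h2, hcm]; push_cast; ring
      have := cast_nat_inj (N := 2*n*m+2) (by omega) (by omega) h1
      omega
  · refine ⟨a, a + c, rfl, ?_, ?_⟩
    · rw [hdiff, hcv]
      simpa using (dvd_mul_left m n)
    · have : a - (a + c) = -c := by ring
      rw [this, ZMod.neg_val, if_neg hc0, hcv]
      have he : 2*n*m+2 - (n*m+1) - 1 = n*m := by omega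
      rw [he]
      exact dvd_mul_left m n

lemma diam_cross (hn : 2 ≤ n) (hm : 1 ≤ m) {p q : Sym2 (ZMod (2*n*m+2))}
    (hp : IsDiameter n m p) (hq : IsDiameter n m q) (hne : p ≠ q) : Crosses p q := by
  haveI : NeZero (2*n*m+2) := ⟨by omega⟩
  have hnm := nm2 n m hn hm
  have hNN : 2*n*m = 2*(n*m) := by ring
  obtain ⟨a, rfl⟩ := hp
  obtain ⟨c0, rfl⟩ := hq
  rw [antipode_apply, antipode_apply] at *
  set c : ZMod (2*n*m+2) := ((n*m+1 : ℕ) : ZMod (2*n*m+2)) with hc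
  have hcv : c.val = n*m+1 := ZMod.val_cast_of_lt (by omega)
  have hcc : c + c = 0 := by
    rw [hc]
    have : ((n*m+1 : ℕ) : ZMod (2*n*m+2)) + ((n*m+1 : ℕ) : ZMod (2*n*m+2))
      = ((2*n*m+2 : ℕ) : ZMod (2*n*m+2)) := by push_cast; ring
    rw [this, ZMod.natCast_self]
  set s := (c0 - a).val with hs
  have hsN : s < 2*n*m+2 := ZMod.val_lt _
  have hc0a : c0 = a + (s : ZMod (2*n*m+2)) := zmod_decomp c0 a
  have hs0 : s ≠ 0 := by
    intro h0
    apply hne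
    have : c0 = a := by rw [hc0a, h0]; simp
    rw [this]
  have hsh : s ≠ n*m+1 := by
    intro h0
    apply hne
    have he : c0 = a + c := by rw [hc0a, h0, hc]
    rw [he]
    have he2 : a + c + c = a := by rw [add_assoc, hcc, add_zero]
    rw [he2, Sym2.eq_swap]
  have hca : (a + c - a) = c := add_sub_cancel_left a c
  have hac : (a - (a + c)).val = n*m+1 := by
    have e : a - (a + c) = -c := by ring
    rw [e, ZMod.neg_val, if_neg (by intro h0; rw [h0] at hcv; simp at hcv), hcv]
    omega
  rw [crosses_iff]
  rcases Nat.lt_or_ge s (n*m+1) with hlt|hge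
  · left
    constructor
    · rw [arcBtw_iff, ← hs, hca, hcv]
      omega
    · rw [arcBtw_iff]
      have e1 : (c0 + c) - (a + c) = c0 - a := by ring
      rw [e1, ← hs, hac]
      omega
  · have hgt : n*m+1 < s := by omega
    right
    constructor
    · rw [arcBtw_iff, hca, hcv]
      have e1 : (c0 + c) - a = ((s + (n*m+1) - (2*n*m+2) : ℕ) : ZMod (2*n*m+2)) := by
        rw [hc0a, hc]
        rw [Nat.cast_sub (by omega : 2*n*m+2 ≤ s + (n*m+1)), ZMod.natCast_self]
        push_cast
        ring
      rw [e1, ZMod.val_cast_of_lt (by omega)]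
      omega
    · rw [arcBtw_iff, hac]
      have e1 : c0 - (a + c) = ((s - (n*m+1) : ℕ) : ZMod (2*n*m+2)) := by
        rw [hc0a, hc, Nat.cast_sub (by omega : n*m+1 ≤ s)]
        push_cast
        ring
      rw [e1, ZMod.val_cast_of_lt (by omega)]
      omega

lemma nondiam_antipode_nocross (hn : 2 ≤ n) (hm : 1 ≤ m) {p : Sym2 (ZMod (2*n*m+2))}
    (hd : IsDiagonal p) (hnd : ¬ IsDiameter n m p) :
    ¬ Crosses p (Sym2.map (antipode n m) p) := by
  haveI : NeZero (2*n*m+2) := ⟨by omega⟩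
  have hnm := nm2 n m hn hm
  have hNN : 2*n*m = 2*(n*m) := by ring
  obtain ⟨a, b, rfl, hne, -, -⟩ := hd
  rw [Sym2.map_pair_eq, antipode_apply, antipode_apply]
  set c : ZMod (2*n*m+2) := ((n*m+1 : ℕ) : ZMod (2*n*m+2)) with hc
  have hcv : c.val = n*m+1 := ZMod.val_cast_of_lt (by omega)
  set d := (b - a).val with hd'
  have hdN : d < 2*n*m+2 := ZMod.val_lt _
  have hba : b = a + (d : ZMod (2*n*m+2)) := zmod_decomp b a
  have hd0 : d ≠ 0 := by
    intro h0
    apply hne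
    rw [hba, h0]; simp
  have hdh : d ≠ n*m+1 := by
    intro h0
    apply hnd
    refine ⟨a, ?_⟩
    rw [antipode_apply, hba, h0]
  have hab : (a - b).val = 2*n*m+2 - d := by
    have e : a - b = -(b - a) := by ring
    rw [e, ZMod.neg_val, if_neg (by
      intro h0
      apply hd0
      rw [hd', h0, ZMod.val_zero])]
  rw [crosses_iff]
  rintro (⟨h1, h2⟩|⟨h1, h2⟩)
  · rw [arcBtw_iff] at h1 h2
    have e1 : a + c - a = c := add_sub_cancel_left a c
    have e2 : b + c - b = c := add_sub_cancel_left b c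
    rw [e1] at h1
    rw [e2, hab] at h2
    rw [hcv] at h1 h2
    omega
  · rw [arcBtw_iff] at h1 h2
    rcases Nat.lt_or_ge d (n*m+1) with hlt|hge
    · have e1 : (b + c) - a = ((d + (n*m+1) : ℕ) : ZMod (2*n*m+2)) := by
        rw [hba, hc]; push_cast; ring
      rw [e1, ZMod.val_cast_of_lt (by omega)] at h1
      omega
    · have hgt : n*m+1 < d := by omega
      have e2 : (a + c) - b = (((2*n*m+2) + (n*m+1) - d : ℕ) : ZMod (2*n*m+2)) := by
        conv_rhs => rw [Nat.cast_sub (by omega : d ≤ (2*n*m+2) + (n*m+1)), Nat.cast_add,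
          ZMod.natCast_self]
        rw [hba, hc]
        push_cast
        ring
      rw [e2, ZMod.val_cast_of_lt (by omega), hab] at h2
      omega

end BSpec

lemma exists_noncross_diam (n m : ℕ) (hn : 2 ≤ n) (hm : 1 ≤ m)
    (B : Finset (Sym2 (ZMod (2*n*m+2))))
    (hdiag : ∀ p ∈ B, IsDiagonal p)
    (hcr : ∀ p ∈ B, ∀ q ∈ B, ¬ Crosses p q)
    (hσ : ∀ p ∈ B, Sym2.map (antipode n m) p ∈ B)
    (hnd : ∀ p ∈ B, ¬ IsDiameter n m p) :
    ∃ a : ZMod (2*n*m+2), ∀ E ∈ B, ¬ Crosses E s(a, antipode n m a) := by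
  haveI : NeZero (2*n*m+2) := ⟨by omega⟩
  have hnm : 2 ≤ n*m := nm2 n m hn hm
  have hNN : 2*n*m = 2*(n*m) := by ring
  set c : ZMod (2*n*m+2) := ((n*m+1 : ℕ) : ZMod (2*n*m+2)) with hc
  have hcv : c.val = n*m+1 := ZMod.val_cast_of_lt (by omega)
  have hcne0 : c ≠ 0 := by intro h0; rw [h0] at hcv; simp at hcv
  have hcc : c + c = 0 := by
    rw [hc]
    have e : ((n*m+1 : ℕ) : ZMod (2*n*m+2)) + ((n*m+1 : ℕ) : ZMod (2*n*m+2))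
      = ((2*n*m+2 : ℕ) : ZMod (2*n*m+2)) := by push_cast; ring
    rw [e, ZMod.natCast_self]
  -- short orientation
  have hshort : ∀ p ∈ B, ∃ x y : ZMod (2*n*m+2),
      p = s(x,y) ∧ 0 < (y - x).val ∧ (y - x).val < n*m+1 := by
    intro p hp
    obtain ⟨a, b, rfl, hne, -, -⟩ := hdiag p hp
    have hdN : (b - a).val < 2*n*m+2 := ZMod.val_lt _
    have hd0 : (b - a).val ≠ 0 := by
      intro h0
      apply hne
      have hz : b - a = 0 := (ZMod.val_eq_zero _).mp h0
      linear_combination hz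
    have hdh : (b - a).val ≠ n*m+1 := by
      intro h0
      apply hnd _ hp
      refine ⟨a, ?_⟩
      rw [antipode_apply, ← hc]
      have : b = a + ((b-a).val : ZMod (2*n*m+2)) := zmod_decomp b a
      rw [this, h0, hc]
    have hab : (a - b).val = 2*n*m+2 - (b - a).val := by
      have e : a - b = -(b - a) := by ring
      rw [e, ZMod.neg_val, if_neg (by
        intro h0; exact hd0 ((ZMod.val_eq_zero _).mpr h0))]
    rcases Nat.lt_or_ge (b - a).val (n*m+1) with hlt|hge
    · exact ⟨a, b, rfl, by omega, hlt⟩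
    · exact ⟨b, a, Sym2.eq_swap, by omega, by omega⟩
  rcases Finset.eq_empty_or_nonempty B with rfl|hBne
  · exact ⟨0, by simp⟩
  set slen : Sym2 (ZMod (2*n*m+2)) → ℕ :=
    Sym2.lift ⟨fun x y => min (y-x).val (x-y).val, by
      intro x y; dsimp only; rw [min_comm]⟩ with hslen
  obtain ⟨D0, hD0B, hD0max⟩ := B.exists_max_image slen hBne
  obtain ⟨x0, y0, hD0eq, hd0pos, hd0lt⟩ := hshort D0 hD0B
  have hyx0 : (x0 - y0).val = 2*n*m+2 - (y0 - x0).val := by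
    have e : x0 - y0 = -(y0 - x0) := by ring
    rw [e, ZMod.neg_val, if_neg (by
      intro h0
      rw [(ZMod.val_eq_zero _).mpr h0] at hd0pos
      omega)]
  have hslenD0 : slen D0 = (y0 - x0).val := by
    rw [hD0eq, hslen, Sym2.lift_mk]
    dsimp only
    rw [hyx0]
    have := ZMod.val_lt (y0 - x0)
    omega
  -- core lemma
  have hcore : ∀ E ∈ B, ∀ u v : ZMod (2*n*m+2), E = s(u,v) → (v - u).val < n*m+1 →
      ¬(0 < (x0 - u).val ∧ (x0 - u).val < (v - u).val) := by
    rintro E hE u v hEuv he ⟨hs1, hs2⟩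
    have hecr := hcr E hE D0 hD0B
    have heN : (v - u).val < 2*n*m+2 := ZMod.val_lt _
    have htN : (y0 - u).val < 2*n*m+2 := ZMod.val_lt _
    have hsN : (x0 - u).val < 2*n*m+2 := ZMod.val_lt _
    have huv : (u - v).val = 2*n*m+2 - (v - u).val := by
      have e : u - v = -(v - u) := by ring
      rw [e, ZMod.neg_val, if_neg (by
        intro h0
        rw [(ZMod.val_eq_zero _).mpr h0] at hs2
        omega)]
    have htle : (y0 - u).val ≤ (v - u).val := by
      by_contra hgt
      push_neg at hgt
      apply hecr
      rw [hEuv, hD0eq, crosses_iff]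
      left
      constructor
      · rw [arcBtw_iff]; exact ⟨hs1, hs2⟩
      · rw [arcBtw_iff, huv]
        have hyu : y0 = u + ((y0 - u).val : ZMod (2*n*m+2)) := zmod_decomp y0 u
        have hvu : v = u + (((v - u)).val : ZMod (2*n*m+2)) := zmod_decomp v u
        have e1 : y0 - v = (((y0 - u).val - (v - u).val : ℕ) : ZMod (2*n*m+2)) := by
          conv_rhs => rw [Nat.cast_sub (by omega)]
          conv_lhs => rw [hyu, hvu]
          push_cast; ring
        rw [e1, ZMod.val_cast_of_lt (by omega)]
        omega
    have htns : (y0 - u).val ≠ (x0 - u).val := by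
      intro h0
      have : y0 = x0 := by
        rw [zmod_decomp y0 u, zmod_decomp x0 u, h0]
      rw [this] at hd0pos
      simp at hd0pos
    have hmax' : slen E ≤ (y0 - x0).val := hslenD0 ▸ hD0max E hE
    have hslenE : slen E = (v - u).val := by
      rw [hEuv, hslen, Sym2.lift_mk]
      dsimp only
      rw [huv]
      omega
    have hxu : x0 = u + ((x0 - u).val : ZMod (2*n*m+2)) := zmod_decomp x0 u
    have hyu : y0 = u + ((y0 - u).val : ZMod (2*n*m+2)) := zmod_decomp y0 u
    rcases Nat.lt_or_ge (x0 - u).val (y0 - u).val with hst|hts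
    · have e1 : (y0 - x0).val = (y0 - u).val - (x0 - u).val := by
        have e : y0 - x0 = (((y0 - u).val - (x0 - u).val : ℕ) : ZMod (2*n*m+2)) := by
          conv_rhs => rw [Nat.cast_sub (by omega)]
          conv_lhs => rw [hyu, hxu]
          push_cast; ring
        rw [e, ZMod.val_cast_of_lt (by omega)]
      omega
    · have e1 : (y0 - x0).val = 2*n*m+2 - ((x0 - u).val - (y0 - u).val) := by
        have e : y0 - x0 = (((2*n*m+2) + (y0 - u).val - (x0 - u).val : ℕ) : ZMod (2*n*m+2)) := by
          conv_rhs => rw [Nat.cast_sub (by omega), Nat.cast_add, ZMod.natCast_self]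
          conv_lhs => rw [hyu, hxu]
          push_cast; ring
        rw [e, ZMod.val_cast_of_lt (by omega)]
        omega
      omega
  refine ⟨x0, ?_⟩
  intro E hE hcrE
  obtain ⟨u, v, hEuv, hep, helt⟩ := hshort E hE
  rw [antipode_apply, ← hc, hEuv, crosses_iff] at hcrE
  rcases hcrE with ⟨h1, -⟩|⟨h1, -⟩
  · rw [arcBtw_iff] at h1
    exact hcore E hE u v hEuv helt h1
  · -- x0 + c strictly inside short arc of E; pass to σE
    rw [arcBtw_iff] at h1
    have hEσ : Sym2.map (antipode n m) E ∈ B := hσ E hE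
    have hEσeq : Sym2.map (antipode n m) E = s(u + c, v + c) := by
      rw [hEuv, Sym2.map_pair_eq, antipode_apply, antipode_apply, ← hc]
    have hlen : ((v + c) - (u + c)).val = (v - u).val := by
      have e : (v + c) - (u + c) = v - u := by ring
      rw [e]
    have harg : 0 < (x0 - (u + c)).val ∧ (x0 - (u + c)).val < ((v + c) - (u + c)).val := by
      have e : x0 - (u + c) = (x0 + c) - u := by linear_combination - hcc
      rw [e, hlen]
      exact h1
    exact hcore _ hEσ (u + c) (v + c) hEσeq (by rw [hlen]; exact helt) harg

/-- Every inclusion-maximal face of `Δ_B(m, n)` has exactly `n` elements: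
`Δ_B(m, n)` is pure of dimension `n - 1`. -/
theorem generalized_cluster_complex_B_pure (n m : ℕ) (hn : 2 ≤ n) (hm : 1 ≤ m)
    (F : Finset (Finset (Sym2 (ZMod (2 * n * m + 2))))) (hF : IsBFace n m F)
    (hmax : ∀ G : Finset (Finset (Sym2 (ZMod (2 * n * m + 2)))),
      IsBFace n m G → F ⊆ G → F = G) :
    F.card = n := by
  classical
  haveI : NeZero (2*n*m+2) := ⟨by omega⟩
  have hnm : 2 ≤ n*m := nm2 n m hn hm
  have hNN : 2*n*m = 2*(n*m) := by ring
  set c : ZMod (2*n*m+2) := ((n*m+1 : ℕ) : ZMod (2*n*m+2)) with hc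
  have hcv : c.val = n*m+1 := ZMod.val_cast_of_lt (by omega)
  have hcne0 : c ≠ 0 := by intro h0; rw [h0] at hcv; simp at hcv
  have hcc : c + c = 0 := by
    rw [hc]
    have e : ((n*m+1 : ℕ) : ZMod (2*n*m+2)) + ((n*m+1 : ℕ) : ZMod (2*n*m+2))
      = ((2*n*m+2 : ℕ) : ZMod (2*n*m+2)) := by push_cast; ring
    rw [e, ZMod.natCast_self]
  have hfun : antipode n m = (· + c) := by
    funext x
    rw [antipode_apply n m x, hc]
  obtain ⟨hFv, hFc⟩ := hF
  set B : Finset (Sym2 (ZMod (2*n*m+2))) := F.biUnion id with hB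
  have hmemB : ∀ (p : Sym2 (ZMod (2*n*m+2))) (v : Finset (Sym2 (ZMod (2*n*m+2)))),
      v ∈ F → p ∈ v → p ∈ B := by
    intro p v hv hp
    exact Finset.mem_biUnion.mpr ⟨v, hv, hp⟩
  have hBmem : ∀ p ∈ B, ∃ v ∈ F, p ∈ v := by
    intro p hp
    obtain ⟨v, hv, hpv⟩ := Finset.mem_biUnion.mp hp
    exact ⟨v, hv, hpv⟩
  have hvert : ∀ v ∈ F, ∀ p ∈ v, IsDiagonal p ∧ MAllowable m p := by
    intro v hv p hp
    rcases hFv v hv with ⟨q, hq, rfl⟩|⟨q, hqd, hqa, hqnd, rfl⟩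
    · rw [Finset.mem_singleton] at hp; subst hp
      exact diam_diag n m hn hm hq
    · rcases Finset.mem_insert.mp hp with rfl|hp'
      · exact ⟨hqd, hqa⟩
      · rw [Finset.mem_singleton] at hp'; subst hp'
        rw [hfun]
        exact ⟨isDiagonal_translate c hqd, mAllowable_translate m c hqa⟩
  have hBdiag : ∀ p ∈ B, IsDiagonal p := by
    intro p hp
    obtain ⟨v, hv, hpv⟩ := hBmem p hp
    exact (hvert v hv p hpv).1
  have hBallow : ∀ p ∈ B, MAllowable m p := by
    intro p hp
    obtain ⟨v, hv, hpv⟩ := hBmem p hp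
    exact (hvert v hv p hpv).2
  have hBcr : ∀ p ∈ B, ∀ q ∈ B, ¬ Crosses p q := by
    intro p hp q hq
    obtain ⟨v, hv, hpv⟩ := hBmem p hp
    obtain ⟨w, hw, hqw⟩ := hBmem q hq
    by_cases hvw : v = w
    · subst hvw
      rcases hFv v hv with ⟨r, hr, rfl⟩|⟨r, hrd, hra, hrnd, rfl⟩
      · rw [Finset.mem_singleton] at hpv hqw; subst hpv; subst hqw
        exact no_self_cross _
      · have hanti := nondiam_antipode_nocross n m hn hm hrd hrnd
        rcases Finset.mem_insert.mp hpv with rfl|hpv' <;>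
          rcases Finset.mem_insert.mp hqw with h2|hqw'
        · rw [h2]; exact no_self_cross _
        · rw [Finset.mem_singleton] at hqw'; rw [hqw']; exact hanti
        · rw [Finset.mem_singleton] at hpv'
          rw [hpv', h2]
          intro hcross
          exact hanti (crosses_symm hcross)
        · rw [Finset.mem_singleton] at hpv' hqw'
          rw [hpv', hqw']
          exact no_self_cross _
    · exact hFc v hv w hw hvw p hpv q hqw
  have hBσ : ∀ p ∈ B, Sym2.map (antipode n m) p ∈ B := by
    intro p hp
    obtain ⟨v, hv, hpv⟩ := hBmem p hp
    rcases hFv v hv with ⟨r, hr, rfl⟩|⟨r, hrd, hra, hrnd, rfl⟩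
    · rw [Finset.mem_singleton] at hpv; subst hpv
      rw [map_antipode_diam n m hr]
      exact hmemB p _ hv (Finset.mem_singleton_self p)
    · rcases Finset.mem_insert.mp hpv with rfl|hpv'
      · exact hmemB _ _ hv (Finset.mem_insert.mpr (Or.inr (Finset.mem_singleton_self _)))
      · rw [Finset.mem_singleton] at hpv'; subst hpv'
        rw [map_antipode_invol]
        exact hmemB r _ hv (Finset.mem_insert_self r _)
  -- Step 1: B contains a diameter
  have hdiamB : ∃ p ∈ B, IsDiameter n m p := by
    by_contra hno
    push_neg at hno
    obtain ⟨a1, ha1⟩ := exists_noncross_diam n m hn hm B hBdiag hBcr hBσ hno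
    set M : Sym2 (ZMod (2*n*m+2)) := s(a1, antipode n m a1) with hM
    have hMd : IsDiameter n m M := ⟨a1, rfl⟩
    have hMnc : ∀ q ∈ B, ¬ Crosses M q := fun q hq hcr' => ha1 q hq (crosses_symm hcr')
    have hMnF : ({M} : Finset (Sym2 (ZMod (2*n*m+2)))) ∉ F := by
      intro hmem
      exact hno M (hmemB M {M} hmem (Finset.mem_singleton_self M)) hMd
    have hG : IsBFace n m (insert {M} F) := by
      constructor
      · intro v hv
        rcases Finset.mem_insert.mp hv with rfl|hv'
        · exact Or.inl ⟨M, hMd, rfl⟩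
        · exact hFv v hv'
      · intro v hv w hw hne
        rcases Finset.mem_insert.mp hv with rfl|hv' <;>
          rcases Finset.mem_insert.mp hw with h2|hw'
        · exact absurd h2.symm hne
        · intro p hp q hq
          rw [Finset.mem_singleton] at hp; subst hp
          exact hMnc q (hmemB q w hw' hq)
        · intro p hp q hq
          rw [h2, Finset.mem_singleton] at hq; subst hq
          intro hcross
          exact hMnc p (hmemB p v hv' hp) (crosses_symm hcross)
        · exact hFc v hv' w hw' hne
    have hfg := hmax _ hG (Finset.subset_insert _ _)
    exact hMnF (hfg ▸ Finset.mem_insert_self {M} F)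
  obtain ⟨M, hMB, hMdiam⟩ := hdiamB
  obtain ⟨a0, hMeq⟩ := hMdiam
  
  -- coordinates relative to a0
  have e_half1 : ∀ x : ZMod (2*n*m+2), ArcBtw a0 (a0 + c) x ↔
      (0 < (x - a0).val ∧ (x - a0).val < n*m+1) := by
    intro x
    rw [arcBtw_iff, add_sub_cancel_left, hcv]
  have hac0 : (a0 - (a0 + c)).val = n*m+1 := by
    have e : a0 - (a0 + c) = -c := by ring
    rw [e, ZMod.neg_val, if_neg hcne0, hcv]
    omega
  have e_half2 : ∀ y : ZMod (2*n*m+2), ArcBtw (a0 + c) a0 y ↔ n*m+1 < (y - a0).val := by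
    intro y
    rw [arcBtw_iff, hac0]
    have hwN : (y - a0).val < 2*n*m+2 := ZMod.val_lt _
    have hy : y = a0 + ((y - a0).val : ZMod (2*n*m+2)) := zmod_decomp y a0
    rcases Nat.lt_or_ge (y - a0).val (n*m+1) with hlt|hge
    · have e1 : y - (a0 + c) =
          (((2*n*m+2) + (y - a0).val - (n*m+1) : ℕ) : ZMod (2*n*m+2)) := by
        conv_rhs => rw [Nat.cast_sub (by omega), Nat.cast_add, ZMod.natCast_self]
        conv_lhs => rw [hy]
        rw [hc]; push_cast; ring
      rw [e1, ZMod.val_cast_of_lt (by omega)]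
      omega
    · have e1 : y - (a0 + c) = (((y - a0).val - (n*m+1) : ℕ) : ZMod (2*n*m+2)) := by
        conv_rhs => rw [Nat.cast_sub hge]
        conv_lhs => rw [hy]
        rw [hc]; push_cast; ring
      rw [e1, ZMod.val_cast_of_lt (by omega)]
      omega
  have hhalf : ∀ q ∈ B, ∀ x y : ZMod (2*n*m+2), q = s(x, y) →
      ((x - a0).val ≤ n*m+1 ∧ (y - a0).val ≤ n*m+1) ∨
      (((x - a0).val = 0 ∨ n*m+1 ≤ (x - a0).val) ∧
       ((y - a0).val = 0 ∨ n*m+1 ≤ (y - a0).val)) := by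
    intro q hq x y hqe
    have hnc := hBcr M hMB q hq
    rw [hMeq, antipode_apply, ← hc, hqe, crosses_iff] at hnc
    simp only [e_half1, e_half2] at hnc
    have hx := ZMod.val_lt (x - a0)
    have hy := ZMod.val_lt (y - a0)
    omega
  set P : Sym2 (ZMod (2*n*m+2)) → Prop :=
    Sym2.lift ⟨fun x y => (x - a0).val ≤ n*m+1 ∧ (y - a0).val ≤ n*m+1, by
      intro x y; dsimp only; rw [and_comm]⟩ with hP
  have hPmk : ∀ x y : ZMod (2*n*m+2), P s(x,y) ↔
      ((x - a0).val ≤ n*m+1 ∧ (y - a0).val ≤ n*m+1) := by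
    intro x y
    rw [hP, Sym2.lift_mk]
  set S : Finset (Sym2 (ZMod (2*n*m+2))) := B.filter P with hS
  have e_coσ : ∀ x : ZMod (2*n*m+2), ((x + c) - a0).val =
      if (x - a0).val < n*m+1 then (x - a0).val + (n*m+1)
      else (x - a0).val - (n*m+1) := by
    intro x
    have hwN : (x - a0).val < 2*n*m+2 := ZMod.val_lt _
    have hx : x = a0 + ((x - a0).val : ZMod (2*n*m+2)) := zmod_decomp x a0
    split_ifs with hlt
    · have e1 : (x + c) - a0 = (((x - a0).val + (n*m+1) : ℕ) : ZMod (2*n*m+2)) := by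
        conv_lhs => rw [hx]
        rw [hc]; push_cast; ring
      rw [e1, ZMod.val_cast_of_lt (by omega)]
    · have e2 : (((x - a0).val - (n*m+1) : ℕ) : ZMod (2*n*m+2))
          = ((x - a0).val : ZMod (2*n*m+2)) + c - ((2*n*m+2 : ℕ) : ZMod (2*n*m+2)) := by
        rw [Nat.cast_sub (by omega), hc]
        push_cast
        ring
      have e1 : (x + c) - a0 = (((x - a0).val - (n*m+1) : ℕ) : ZMod (2*n*m+2)) := by
        rw [e2, ZMod.natCast_self, sub_zero]
        conv_lhs => rw [hx]
        ring
      rw [e1, ZMod.val_cast_of_lt (by omega)]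
  have hMS_half : P M := by
    rw [hMeq, antipode_apply, ← hc, hPmk]
    constructor
    · simp
    · rw [add_sub_cancel_left, hcv]
  have hMS : M ∈ S := Finset.mem_filter.mpr ⟨hMB, hMS_half⟩
  have hsig_ne : ∀ r : Sym2 (ZMod (2*n*m+2)), IsDiagonal r → ¬ IsDiameter n m r →
      r ≠ Sym2.map (antipode n m) r := by
    intro r hrd hrnd heq
    obtain ⟨x, y, rfl, hyx, -, -⟩ := hrd
    rw [Sym2.map_pair_eq, antipode_apply, antipode_apply, ← hc, Sym2.eq_iff] at heq
    rcases heq with ⟨h1, -⟩|⟨h1, h2⟩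
    · exact hcne0 (by linear_combination -h1)
    · apply hrnd
      refine ⟨y, ?_⟩
      rw [antipode_apply, ← hc, h1, Sym2.eq_swap]
  have hdisj : ∀ v ∈ F, ∀ w ∈ F, v ≠ w → Disjoint v w := by
    intro v hv w hw hne
    rw [Finset.disjoint_left]
    intro p hpv hpw
    apply hne
    rcases hFv v hv with ⟨r, hr, rfl⟩|⟨r, hrd, hra, hrnd, rfl⟩ <;>
      rcases hFv w hw with ⟨r2, hr2, rfl⟩|⟨r2, hr2d, hr2a, hr2nd, rfl⟩
    · rw [Finset.mem_singleton] at hpv hpw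
      rw [← hpv, ← hpw]
    · exfalso
      rw [Finset.mem_singleton] at hpv
      have hpd : IsDiameter n m p := by rw [hpv]; exact hr
      rcases Finset.mem_insert.mp hpw with h2|h2
      · exact hr2nd (h2 ▸ hpd)
      · rw [Finset.mem_singleton] at h2
        exact diam_sigma_nondiam n m hr2nd (h2 ▸ hpd)
    · exfalso
      rw [Finset.mem_singleton] at hpw
      have hpd : IsDiameter n m p := by rw [hpw]; exact hr2
      rcases Finset.mem_insert.mp hpv with h2|h2
      · exact hrnd (h2 ▸ hpd)
      · rw [Finset.mem_singleton] at h2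
        exact diam_sigma_nondiam n m hrnd (h2 ▸ hpd)
    · rcases Finset.mem_insert.mp hpv with h1|h1 <;>
        rcases Finset.mem_insert.mp hpw with h2|h2
      · rw [← h1, h2]
      · rw [Finset.mem_singleton] at h2
        rw [← h1, h2, map_antipode_invol, Finset.pair_comm]
      · rw [Finset.mem_singleton] at h1
        rw [← h2, h1, map_antipode_invol, Finset.pair_comm]
      · rw [Finset.mem_singleton] at h1 h2
        have : r = r2 := by
          rw [← map_antipode_invol n m r, ← h1, h2, map_antipode_invol]
        rw [this]
  have hSone : ∀ v ∈ F, (v.filter P).card = 1 := by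
    intro v hv
    rcases hFv v hv with ⟨r, hr, rfl⟩|⟨r, hrd, hra, hrnd, rfl⟩
    · have hrB : r ∈ B := hmemB r {r} hv (Finset.mem_singleton_self r)
      have hrM : r = M := by
        by_contra hne
        exact hBcr M hMB r hrB
          (diam_cross n m hn hm ⟨a0, hMeq⟩ hr (fun h => hne h.symm))
      rw [hrM, Finset.filter_singleton, if_pos hMS_half]
      exact Finset.card_singleton M
    · obtain ⟨x, y, hrxy, -, -, -⟩ := id hrd
      have hyx : y ≠ x := (diag_conditions hrd hrxy).1
      have hrB : r ∈ B := hmemB r _ hv (Finset.mem_insert_self _ _)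
      have hσrB : Sym2.map (antipode n m) r ∈ B :=
        hmemB _ _ hv (Finset.mem_insert.mpr (Or.inr (Finset.mem_singleton_self _)))
      have hdich := hhalf r hrB x y hrxy
      have hPiff : P r ↔ ((x - a0).val ≤ n*m+1 ∧ (y - a0).val ≤ n*m+1) := by
        rw [hrxy]; exact hPmk x y
      have hσreq : Sym2.map (antipode n m) r = s(x + c, y + c) := by
        rw [hrxy, Sym2.map_pair_eq, antipode_apply, antipode_apply, ← hc]
      have hPσr : P (Sym2.map (antipode n m) r) ↔
          (((x + c) - a0).val ≤ n*m+1 ∧ ((y + c) - a0).val ≤ n*m+1) := by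
        rw [hσreq]; exact hPmk _ _
      have hxN := ZMod.val_lt (x - a0)
      have hyN := ZMod.val_lt (y - a0)
      have hkey : (P r ∧ ¬ P (Sym2.map (antipode n m) r)) ∨
          (¬ P r ∧ P (Sym2.map (antipode n m) r)) := by
        by_cases hpr : P r
        · left
          refine ⟨hpr, ?_⟩
          intro hpσ
          rw [hPσr, e_coσ x, e_coσ y] at hpσ
          rw [hPiff] at hpr
          have hwx01 : (x - a0).val = 0 ∨ (x - a0).val = n*m+1 := by
            split_ifs at hpσ <;> omega
          have hwy01 : (y - a0).val = 0 ∨ (y - a0).val = n*m+1 := by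
            split_ifs at hpσ <;> omega
          have hx0 : (x - a0).val = 0 → x = a0 := by
            intro h0
            rw [zmod_decomp x a0, h0]; simp
          have hxc : (x - a0).val = n*m+1 → x = a0 + c := by
            intro h0
            rw [zmod_decomp x a0, h0, hc]
          have hy0 : (y - a0).val = 0 → y = a0 := by
            intro h0
            rw [zmod_decomp y a0, h0]; simp
          have hyc : (y - a0).val = n*m+1 → y = a0 + c := by
            intro h0
            rw [zmod_decomp y a0, h0, hc]
          rcases hwx01 with h1|h1 <;> rcases hwy01 with h2|h2
          · exact hyx ((hy0 h2).trans (hx0 h1).symm)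
          · exact hrnd ⟨a0, by rw [hrxy, hx0 h1, hyc h2, antipode_apply, ← hc]⟩
          · apply hrnd
            refine ⟨a0, ?_⟩
            rw [hrxy, hxc h1, hy0 h2, antipode_apply, ← hc, Sym2.eq_swap]
          · exact hyx ((hyc h2).trans (hxc h1).symm)
        · right
          refine ⟨hpr, ?_⟩
          rw [hPiff] at hpr
          rw [hPσr, e_coσ x, e_coσ y]
          rcases hdich with hin|hother
          · exact absurd hin hpr
          · split_ifs <;> omega
      rcases hkey with ⟨h1, h2⟩|⟨h1, h2⟩
      · rw [Finset.filter_insert, if_pos h1, Finset.filter_singleton, if_neg h2]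
        simp
      · rw [Finset.filter_insert, if_neg h1, Finset.filter_singleton, if_pos h2]
        exact Finset.card_singleton _
  have hFS : S.card = F.card := by
    have hSB : S = F.biUnion (fun v => v.filter P) := by
      rw [hS, hB, Finset.filter_biUnion]
      rfl
    rw [hSB, Finset.card_biUnion (fun v hv w hw hne =>
      Finset.disjoint_filter_filter (hdisj v hv w hw hne))]
    calc ∑ v ∈ F, (v.filter P).card = ∑ _v ∈ F, 1 := Finset.sum_congr rfl hSone
      _ = F.card := by simp
  
  set toChord : Sym2 (ZMod (2*n*m+2)) → ℕ × ℕ :=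
    Sym2.lift ⟨fun x y => (min (x - a0).val (y - a0).val, max (x - a0).val (y - a0).val), by
      intro x y; dsimp only; rw [min_comm, max_comm]⟩ with htc
  have htcmk : ∀ x y : ZMod (2*n*m+2), toChord s(x,y)
      = (min (x - a0).val (y - a0).val, max (x - a0).val (y - a0).val) := by
    intro x y; rw [htc, Sym2.lift_mk]
  have hrep : ∀ p ∈ S, ∃ i j : ℕ, i < j ∧ j ≤ n*m+1 ∧ 2 ≤ j - i ∧ m ∣ (j - i - 1) ∧
      p = s(a0 + (i : ZMod (2*n*m+2)), a0 + (j : ZMod (2*n*m+2))) ∧ toChord p = (i, j) := by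
    intro p hp
    have hp' := hp
    rw [hS] at hp'
    obtain ⟨hpB, hpP⟩ := Finset.mem_filter.mp hp'
    have hpd := hBdiag p hpB
    obtain ⟨x, y, hpxy, -, -, -⟩ := id hpd
    have hcond := diag_conditions hpd hpxy
    have hallow := allow_conditions (hBallow p hpB) hpxy
    have hPxy : (x - a0).val ≤ n*m+1 ∧ (y - a0).val ≤ n*m+1 := by
      rw [hpxy] at hpP; exact (hPmk x y).mp hpP
    have hxN := ZMod.val_lt (x - a0)
    have hyN := ZMod.val_lt (y - a0)
    have hxd : x = a0 + ((x - a0).val : ZMod (2*n*m+2)) := zmod_decomp x a0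
    have hyd : y = a0 + ((y - a0).val : ZMod (2*n*m+2)) := zmod_decomp y a0
    have hne : (x - a0).val ≠ (y - a0).val := by
      intro h0
      apply hcond.1
      rw [hyd, hxd, h0]
    rcases Nat.lt_or_ge (x - a0).val (y - a0).val with hxy|hge
    · refine ⟨(x - a0).val, (y - a0).val, hxy, hPxy.2, ?_, ?_, ?_, ?_⟩
      · by_contra hlt2
        have hj1 : (y - a0).val = (x - a0).val + 1 := by omega
        apply hcond.2.1
        rw [hyd, hxd, hj1]
        push_cast
        ring
      · have e1 : (y - x).val = (y - a0).val - (x - a0).val := by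
          have e : y - x = (((y - a0).val - (x - a0).val : ℕ) : ZMod (2*n*m+2)) := by
            conv_rhs => rw [Nat.cast_sub (le_of_lt hxy)]
            conv_lhs => rw [hyd, hxd]
            push_cast; ring
          rw [e, ZMod.val_cast_of_lt (by omega)]
        have h2 := hallow.1
        rw [e1] at h2
        exact h2
      · rw [hpxy]
        conv_lhs => rw [hxd, hyd]
      · rw [hpxy, htcmk, min_eq_left (le_of_lt hxy), max_eq_right (le_of_lt hxy)]
    · have hyx : (y - a0).val < (x - a0).val := by omega
      refine ⟨(y - a0).val, (x - a0).val, hyx, hPxy.1, ?_, ?_, ?_, ?_⟩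
      · by_contra hlt2
        have hj1 : (x - a0).val = (y - a0).val + 1 := by omega
        apply hcond.2.2
        rw [hxd, hyd, hj1]
        push_cast
        ring
      · have e1 : (x - y).val = (x - a0).val - (y - a0).val := by
          have e : x - y = (((x - a0).val - (y - a0).val : ℕ) : ZMod (2*n*m+2)) := by
            conv_rhs => rw [Nat.cast_sub (le_of_lt hyx)]
            conv_lhs => rw [hxd, hyd]
            push_cast; ring
          rw [e, ZMod.val_cast_of_lt (by omega)]
        have h2 := hallow.2
        rw [e1] at h2
        exact h2
      · rw [hpxy]
        conv_lhs => rw [hxd, hyd]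
        exact Sym2.eq_swap
      · rw [hpxy, htcmk, min_eq_right (le_of_lt hyx), max_eq_left (le_of_lt hyx)]
  set T : Finset (ℕ × ℕ) := S.image toChord with hT
  have hST : T.card = S.card := by
    rw [hT]
    apply Finset.card_image_of_injOn
    intro p hp q hq he
    obtain ⟨i, j, hij, hjle, -, -, hpe, hpc⟩ := hrep p (Finset.mem_coe.mp hp)
    obtain ⟨u, v, huv, hvle, -, -, hqe, hqc⟩ := hrep q (Finset.mem_coe.mp hq)
    rw [hpc, hqc, Prod.mk.injEq] at he
    rw [hpe, hqe, he.1, he.2]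
  have hTch : ∀ cc ∈ T, IChord m (n*m+1) cc := by
    intro cc hcc'
    rw [hT] at hcc'
    obtain ⟨p, hpS, rfl⟩ := Finset.mem_image.mp hcc'
    obtain ⟨i, j, hij, hjle, h2, hdvd, -, hpc⟩ := hrep p hpS
    rw [hpc]
    exact ⟨h2, hjle, hdvd⟩
  have hTfull : (0, n*m+1) ∈ T := by
    rw [hT]
    apply Finset.mem_image.mpr
    refine ⟨M, hMS, ?_⟩
    rw [hMeq, antipode_apply, ← hc, htcmk, sub_self, ZMod.val_zero,
      add_sub_cancel_left, hcv]
    simp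
  have hTncr : ∀ cc ∈ T, ∀ dd ∈ T, ¬ ICross cc dd := by
    intro cc hcc' dd hdd' hcross
    rw [hT] at hcc' hdd'
    obtain ⟨p, hpS, rfl⟩ := Finset.mem_image.mp hcc'
    obtain ⟨q, hqS, rfl⟩ := Finset.mem_image.mp hdd'
    obtain ⟨i, j, hij, hjle, -, -, hpe, hpc⟩ := hrep p hpS
    obtain ⟨u, v, huv, hvle, -, -, hqe, hqc⟩ := hrep q hqS
    rw [hpc, hqc] at hcross
    have hpB : p ∈ B := by
      have hp' := hpS; rw [hS] at hp'; exact (Finset.mem_filter.mp hp').1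
    have hqB : q ∈ B := by
      have hq' := hqS; rw [hS] at hq'; exact (Finset.mem_filter.mp hq').1
    apply hBcr p hpB q hqB
    rw [hpe, hqe, crosses_coord a0 hij (by omega) huv (by omega)]
    unfold ICross at hcross
    dsimp only at hcross
    exact hcross
  
  have hTmax : ∀ cc, IChord m (n*m+1) cc → cc ∉ T → ∃ dd ∈ T, ICross cc dd := by
    rintro ⟨u, v⟩ hch hnin
    by_contra hnoc
    push_neg at hnoc
    obtain ⟨hcc2, hccL, hccd⟩ := hch
    dsimp only at hcc2 hccL hccd
    set D : Sym2 (ZMod (2*n*m+2)) :=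
      s(a0 + (u : ZMod (2*n*m+2)), a0 + (v : ZMod (2*n*m+2))) with hD
    have hvalu : ((u : ℕ) : ZMod (2*n*m+2)).val = u := ZMod.val_cast_of_lt (by omega)
    have hvalv : ((v : ℕ) : ZMod (2*n*m+2)).val = v := ZMod.val_cast_of_lt (by omega)
    have hDdiag : IsDiagonal D := by
      refine ⟨a0 + (u : ZMod (2*n*m+2)), a0 + (v : ZMod (2*n*m+2)), hD, ?_, ?_, ?_⟩
      · intro he
        have h1 : ((v:ℕ) : ZMod (2*n*m+2)) = ((u:ℕ) : ZMod (2*n*m+2)) := by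
          linear_combination he
        have := cast_nat_inj (by omega) (by omega) h1
        omega
      · intro he
        have h1 : ((v:ℕ) : ZMod (2*n*m+2)) = ((u+1:ℕ) : ZMod (2*n*m+2)) := by
          push_cast; linear_combination he
        have := cast_nat_inj (by omega) (by omega) h1
        omega
      · intro he
        have h1 : ((v+1:ℕ) : ZMod (2*n*m+2)) = ((u:ℕ) : ZMod (2*n*m+2)) := by
          push_cast; linear_combination he
        have := cast_nat_inj (by omega) (by omega) h1
        omega
    have hDns : ((a0 + (v:ZMod (2*n*m+2))) - (a0 + (u:ZMod (2*n*m+2))))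
        = ((v - u : ℕ) : ZMod (2*n*m+2)) := by
      rw [Nat.cast_sub (by omega)]; ring
    have hDval : ((a0 + (v:ZMod (2*n*m+2))) - (a0 + (u:ZMod (2*n*m+2)))).val = v - u := by
      rw [hDns, ZMod.val_cast_of_lt (by omega)]
    have hDval2 : ((a0 + (u:ZMod (2*n*m+2))) - (a0 + (v:ZMod (2*n*m+2)))).val
        = 2*n*m+2 - (v - u) := by
      have e : (a0 + (u:ZMod (2*n*m+2))) - (a0 + (v:ZMod (2*n*m+2)))
          = -(((v - u : ℕ) : ZMod (2*n*m+2))) := by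
        rw [← hDns]; ring
      rw [e, ZMod.neg_val, if_neg (by
        intro h0
        have h2 := congrArg ZMod.val h0
        rw [ZMod.val_cast_of_lt (by omega), ZMod.val_zero] at h2
        omega), ZMod.val_cast_of_lt (by omega)]
    have hDallow : MAllowable m D := by
      refine ⟨_, _, hD, ?_, ?_⟩
      · rw [hDval]; exact hccd
      · rw [hDval2]
        have e : 2*n*m+2 - (v - u) - 1 = (2*n*m) - (v - u - 1) := by omega
        rw [e]
        exact Nat.dvd_sub ⟨2*n, by ring⟩ hccd
    have hDnd : ¬ IsDiameter n m D := by
      rintro ⟨a1, heq⟩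
      rw [hD, antipode_apply, ← hc, Sym2.eq_iff] at heq
      rcases heq with ⟨h1, h2⟩|⟨h1, h2⟩
      · rw [← h1, hc] at h2
        push_cast at h2
        have h5 : ((v:ℕ) : ZMod (2*n*m+2)) = ((u + (n*m+1) : ℕ) : ZMod (2*n*m+2)) := by
          push_cast; linear_combination h2
        have h6 := cast_nat_inj (by omega) (by omega) h5
        apply hnin
        have hu0 : u = 0 := by omega
        have hv1 : v = n*m+1 := by omega
        rw [hu0, hv1]
        exact hTfull
      · rw [← h2, hc] at h1
        push_cast at h1
        have h5 : ((u:ℕ) : ZMod (2*n*m+2)) = ((v + (n*m+1) : ℕ) : ZMod (2*n*m+2)) := by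
          push_cast; linear_combination h1
        rcases Nat.lt_or_ge (v + (n*m+1)) (2*n*m+2) with hvN|hvN
        · have := cast_nat_inj (by omega) hvN h5
          omega
        · have hv1 : v = n*m+1 := by omega
          have h6 : ((u:ℕ) : ZMod (2*n*m+2)) = ((0:ℕ) : ZMod (2*n*m+2)) := by
            rw [h5, hv1, show n*m+1 + (n*m+1) = 2*n*m+2 from by ring, ZMod.natCast_self]
            simp
          have hu0 := cast_nat_inj (by omega) (by omega) h6
          apply hnin
          rw [hu0, hv1]
          exact hTfull
    have hcou : ((a0 + (u:ZMod (2*n*m+2))) - a0).val = u := by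
      rw [add_sub_cancel_left, hvalu]
    have hcov : ((a0 + (v:ZMod (2*n*m+2))) - a0).val = v := by
      rw [add_sub_cancel_left, hvalv]
    have hDninB : D ∉ B := by
      intro hDB
      have hDS : D ∈ S := by
        rw [hS]
        refine Finset.mem_filter.mpr ⟨hDB, ?_⟩
        rw [hD, hPmk, hcou, hcov]
        omega
      apply hnin
      rw [hT]
      refine Finset.mem_image.mpr ⟨D, hDS, ?_⟩
      rw [hD, htcmk, hcou, hcov, min_eq_left (by omega), max_eq_right (by omega)]
    have hDnc : ∀ q ∈ B, ¬ Crosses D q := by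
      intro q hq hcrsq
      have hqd := hBdiag q hq
      obtain ⟨x, y, hqxy, -, -, -⟩ := id hqd
      rcases hhalf q hq x y hqxy with hbig|hother
      · have hqS : q ∈ S := by
          rw [hS]
          refine Finset.mem_filter.mpr ⟨hq, ?_⟩
          rw [hqxy, hPmk]
          exact hbig
        obtain ⟨i', j', hij', hj'le, -, -, hqe2, hqch⟩ := hrep q hqS
        have hmemT : toChord q ∈ T := by
          rw [hT]; exact Finset.mem_image.mpr ⟨q, hqS, rfl⟩
        have hncr := hnoc _ hmemT
        rw [hqch] at hncr
        rw [hD, hqe2, crosses_coord a0 (by omega) (by omega) hij' (by omega)] at hcrsq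
        unfold ICross at hncr
        dsimp only at hncr
        omega
      · have hxN := ZMod.val_lt (x - a0)
        have hyN := ZMod.val_lt (y - a0)
        rw [hD, hqxy, crosses_iff] at hcrsq
        have harc : ∀ z : ZMod (2*n*m+2), ((z - a0).val = 0 ∨ n*m+1 ≤ (z - a0).val) →
            ¬ ArcBtw (a0 + (u:ZMod (2*n*m+2))) (a0 + (v:ZMod (2*n*m+2))) z := by
          intro z hz harc'
          have hzd : z = a0 + ((z - a0).val : ZMod (2*n*m+2)) := zmod_decomp z a0
          have hzN := ZMod.val_lt (z - a0)
          rw [arcBtw_iff, hDval] at harc'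
          have e1 : (z - (a0 + (u:ZMod (2*n*m+2)))).val = dN (2*n*m+2) u (z - a0).val := by
            conv_lhs => rw [hzd]
            exact val_shift a0 (z - a0).val u hzN (by omega)
          rw [e1] at harc'
          unfold dN at harc'
          split_ifs at harc' <;> omega
        rcases hcrsq with ⟨h1, -⟩|⟨h1, -⟩
        · exact harc x hother.1 h1
        · exact harc y hother.2 h1
    set Dσ : Sym2 (ZMod (2*n*m+2)) := Sym2.map (antipode n m) D with hDσ
    have hDσnc : ∀ q ∈ B, ¬ Crosses Dσ q := by
      intro q hq hcr'
      have h1 : Crosses (Sym2.map (antipode n m) D)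
          (Sym2.map (antipode n m) (Sym2.map (antipode n m) q)) := by
        rw [map_antipode_invol]
        exact hcr'
      rw [hfun, crosses_translate, ← hfun] at h1
      exact hDnc _ (hBσ q hq) h1
    set v0 : Finset (Sym2 (ZMod (2*n*m+2))) := {D, Dσ} with hv0
    have hv0nF : v0 ∉ F := by
      intro hmem
      exact hDninB (hmemB D v0 hmem (Finset.mem_insert_self _ _))
    have hG : IsBFace n m (insert v0 F) := by
      constructor
      · intro v hv
        rcases Finset.mem_insert.mp hv with rfl|hv'
        · exact Or.inr ⟨D, hDdiag, hDallow, hDnd, by rw [hv0, hDσ]⟩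
        · exact hFv v hv'
      · intro v hv w hw hne
        have hv0compat : ∀ w' ∈ F, BCompat n m v0 w' := by
          intro w' hw' p hp q hq
          have hqB : q ∈ B := hmemB q w' hw' hq
          rw [hv0] at hp
          rcases Finset.mem_insert.mp hp with rfl|hp'
          · exact hDnc q hqB
          · rw [Finset.mem_singleton] at hp'
            rw [hp']
            exact hDσnc q hqB
        rcases Finset.mem_insert.mp hv with rfl|hv' <;>
          rcases Finset.mem_insert.mp hw with h2|hw'
        · exact absurd h2.symm hne
        · exact hv0compat w hw'
        · subst h2
          intro p hp q hq hcr'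
          exact hv0compat v hv' q hq p hp (crosses_symm hcr')
        · exact hFc v hv' w hw' hne
    have hfg := hmax _ hG (Finset.subset_insert _ _)
    exact hv0nF (hfg ▸ Finset.mem_insert_self v0 F)
  have hcard := imax_card m hm (n*m+1) (by omega)
    (by simp only [Nat.add_sub_cancel]; exact dvd_mul_left m n) T
    ⟨hTch, hTncr, hTfull, hTmax⟩
  have hTn : T.card = n := by
    have h1 : T.card * m = n * m := by
      rw [hcard]
      omega
    exact Nat.eq_of_mul_eq_mul_right (by omega) h1
  omega
end

section
/- For all integers n ≥ 2 and m ≥ 1, one has Σ_{k=0}^{n} (−1)^{n−k} f^D_k(n,m) = C((n−1)(m−1)+n, n) + C((n−1)(m−1)+n−1, n); that is, the reduced Euler characteristic of Δ^m(D_n) equals (−1)^{n−1} times the number f^D_n(n, m−1) of maximal simplices of Δ^{m−1}(D_n). -/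
open Finset

/-- The binomial coefficient `C(a, b)` for integers `a, b`, with the convention
that it vanishes unless `0 ≤ b ≤ a`. -/
def cc (a b : ℤ) : ℚ :=
  if 0 ≤ b ∧ b ≤ a then (a.toNat.choose b.toNat : ℚ) else 0

/-- The type-A face numbers `f^A_k(n, m) = (1/(k+1))·C(n,k)·C((n+1)m+k+1, k)`:
the number of `k`-element faces of the generalized cluster complex `Δ^m(A_n)`. -/
def fA (n m k : ℕ) : ℚ :=
  1 / ((k : ℚ) + 1) * cc n k * cc (((n : ℤ) + 1) * m + k + 1) k

/-- The type-B face numbers `f^B_k(n, m) = C(n,k)·C(nm+k, k)`: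
the number of `k`-element faces of the generalized cluster complex `Δ^m(B_n)`. -/
def fB (n m k : ℕ) : ℚ :=
  cc n k * cc ((n : ℤ) * m + k) k

/-- The type-D face numbers
`f^D_k(n, m) = C(n,k)·C((n-1)m+k, k) + C(n-2,k-2)·C((n-1)m+k-1, k)`:
the number of `k`-element faces of the generalized cluster complex `Δ^m(D_n)`. -/
def fD (n m k : ℕ) : ℚ :=
  cc n k * cc (((n : ℤ) - 1) * m + k) k
    + cc ((n : ℤ) - 2) ((k : ℤ) - 2) * cc (((n : ℤ) - 1) * m + k - 1) k

lemma cc_natCast (a b : ℕ) : cc a b = a.choose b := by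
  unfold cc
  split_ifs with h
  · simp
  · push_cast at h
    rw [Nat.choose_eq_zero_of_lt (by omega)]
    simp

lemma neg_one_pow_sub (p i : ℕ) (h : i ≤ p) : (-1:ℚ)^(p-i) = (-1:ℚ)^p * (-1:ℚ)^i := by
  have hne : ((-1:ℚ)^i) ≠ 0 := pow_ne_zero _ (by norm_num)
  apply mul_right_cancel₀ hne
  rw [← pow_add, Nat.sub_add_cancel h, mul_assoc, ← pow_add]
  have e : i + i = 2 * i := by ring
  rw [e, pow_mul]
  norm_num


lemma key (n : ℕ) : ∀ x r : ℕ,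
    ∑ k ∈ Finset.range (n+1), (-1:ℚ)^k * (n.choose k) * ((x+k).choose (k+r))
      = (-1:ℚ)^n * (x.choose (n+r)) := by
  induction n with
  | zero => intro x r; simp
  | succ n ih =>
    intro x r
    rw [Finset.sum_range_succ']
    have h1 : ∀ i ∈ Finset.range (n+1),
        (-1:ℚ)^(i+1) * (((n+1).choose (i+1) : ℕ) : ℚ) * (((x+(i+1)).choose ((i+1)+r) : ℕ) : ℚ)
        = -((-1:ℚ)^i * (n.choose i : ℚ) * ((((x+1)+i).choose (i+(r+1)) : ℕ) : ℚ))
          + (-1:ℚ)^(i+1) * (n.choose (i+1) : ℚ) * (((x+(i+1)).choose ((i+1)+r) : ℕ) : ℚ) := by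
      intro i _
      rw [Nat.choose_succ_succ]
      have e1 : x + (i+1) = (x+1) + i := by ring
      have e2 : (i+1) + r = i + (r+1) := by ring
      rw [e1, e2]
      push_cast
      ring
    rw [Finset.sum_congr rfl h1, Finset.sum_add_distrib]
    have h2 : ∑ i ∈ Finset.range (n+1),
        -((-1:ℚ)^i * (n.choose i : ℚ) * ((((x+1)+i).choose (i+(r+1)) : ℕ) : ℚ))
        = -((-1:ℚ)^n * (((x+1).choose (n+(r+1)) : ℕ) : ℚ)) := by
      rw [Finset.sum_neg_distrib, ih (x+1) (r+1)]
    have h3 : (∑ i ∈ Finset.range (n+1),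
        (-1:ℚ)^(i+1) * (n.choose (i+1) : ℚ) * (((x+(i+1)).choose ((i+1)+r) : ℕ) : ℚ))
        + (-1:ℚ)^0 * (((n+1).choose 0 : ℕ) : ℚ) * (((x+0).choose (0+r) : ℕ) : ℚ)
        = (-1:ℚ)^n * ((x.choose (n+r) : ℕ) : ℚ) := by
      have : (∑ i ∈ Finset.range (n+1),
          (-1:ℚ)^(i+1) * (n.choose (i+1) : ℚ) * (((x+(i+1)).choose ((i+1)+r) : ℕ) : ℚ))
          + (-1:ℚ)^0 * ((n.choose 0 : ℕ) : ℚ) * (((x+0).choose (0+r) : ℕ) : ℚ)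
          = ∑ k ∈ Finset.range (n+2), (-1:ℚ)^k * (n.choose k : ℚ) * (((x+k).choose (k+r) : ℕ) : ℚ) := by
        conv_rhs => rw [Finset.sum_range_succ']
      simp only [pow_zero, Nat.choose_zero_right, Nat.cast_one] at this ⊢
      rw [this, Finset.sum_range_succ, Nat.choose_succ_self]
      simpa using ih x r
    rw [h2, add_assoc, h3]
    have h4 : (x+1).choose (n+(r+1)) = x.choose (n+r) + x.choose (n+r+1) := by
      have : n + (r+1) = (n+r) + 1 := by ring
      rw [this, Nat.choose_succ_succ]
    have h5 : n + 1 + r = n + r + 1 := by ring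
    rw [h4, h5]
    push_cast
    ring

/-- `Σ_{k=0}^{n} (−1)^{n−k} f^D_k(n,m) = C((n−1)(m−1)+n, n) + C((n−1)(m−1)+n−1, n)`:
the reduced Euler characteristic of `Δ^m(D_n)` equals `(−1)^{n−1}` times the
number `f^D_n(n, m−1)` of maximal simplices of `Δ^{m−1}(D_n)`. -/
theorem euler_characteristic_type_D (n m : ℕ) (hn : 2 ≤ n) (hm : 1 ≤ m) :
    ∑ k ∈ Finset.range (n + 1), (-1 : ℚ) ^ (n - k) * fD n m k
      = (((n - 1) * (m - 1) + n).choose n : ℚ)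
        + (((n - 1) * (m - 1) + n - 1).choose n : ℚ) := by
  obtain ⟨p, rfl⟩ : ∃ p, n = p + 2 := ⟨n - 2, by omega⟩
  obtain ⟨q, rfl⟩ : ∃ q, m = q + 1 := ⟨m - 1, by omega⟩
  set x := (p+1)*(q+1) with hx
  have hfD : ∀ k, fD (p+2) (q+1) k
      = (((p+2).choose k : ℕ) : ℚ) * (((x+k).choose k : ℕ) : ℚ)
        + cc (p : ℤ) ((k : ℤ) - 2) * cc ((x : ℤ) + k - 1) k := by
    intro k
    unfold fD
    push_cast
    have e3 : (((p:ℤ)+2) - 1) * ((q:ℤ)+1) + k - 1 = ((x : ℤ) + k - 1) := by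
      push_cast [hx]; ring
    have e1 : (((p:ℤ)+2) - 1) * ((q:ℤ)+1) + k = ((x + k : ℕ) : ℤ) := by
      push_cast [hx]; ring
    have e2 : (((p:ℤ)+2) - 2) = (p : ℤ) := by ring
    rw [e3, e1, e2, show ((p:ℤ) + 2) = ((p+2 : ℕ) : ℤ) by push_cast; ring,
      cc_natCast, cc_natCast]
  simp only [hfD, mul_add]
  rw [Finset.sum_add_distrib]
  have hS1 : ∑ k ∈ Finset.range (p+2+1),
      (-1:ℚ)^(p+2-k) * ((((p+2).choose k : ℕ) : ℚ) * (((x+k).choose k : ℕ) : ℚ))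
      = ((x.choose (p+2) : ℕ) : ℚ) := by
    have hc : ∀ k ∈ Finset.range (p+2+1),
        (-1:ℚ)^(p+2-k) * ((((p+2).choose k : ℕ) : ℚ) * (((x+k).choose k : ℕ) : ℚ))
        = (-1:ℚ)^(p+2) * ((-1:ℚ)^k * (((p+2).choose k : ℕ) : ℚ) * (((x+k).choose (k+0) : ℕ) : ℚ)) := by
      intro k hk
      rw [Finset.mem_range] at hk
      rw [neg_one_pow_sub (p+2) k (by omega)]
      ring_nf
    rw [Finset.sum_congr rfl hc, ← Finset.mul_sum, key (p+2) x 0]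
    rw [← mul_assoc, ← pow_add]
    have e : p + 2 + (p + 2) = 2 * (p+2) := by ring
    rw [e, pow_mul]
    norm_num
  have hS2 : ∑ k ∈ Finset.range (p+2+1),
      (-1:ℚ)^(p+2-k) * (cc (p : ℤ) ((k : ℤ) - 2) * cc ((x : ℤ) + k - 1) k)
      = (((x+1).choose (p+2) : ℕ) : ℚ) := by
    rw [show p+2+1 = p+1+1+1 from rfl, Finset.sum_range_succ', Finset.sum_range_succ']
    have hz0 : cc (p : ℤ) ((0 : ℕ) - 2 : ℤ) = 0 := by
      unfold cc; split_ifs with h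
      · exfalso; have h1 := h.1; push_cast at h1
      · rfl
    have hz1 : cc (p : ℤ) (((0 + 1 : ℕ) : ℤ) - 2) = 0 := by
      unfold cc; split_ifs with h
      · exfalso; have h1 := h.1; push_cast at h1
      · rfl
    rw [hz0, hz1]
    have hterm : ∀ i ∈ Finset.range (p+1),
        (-1:ℚ)^(p+2-(i+1+1)) * (cc (p : ℤ) (((i+1+1:ℕ) : ℤ) - 2) * cc ((x : ℤ) + ((i+1+1:ℕ):ℤ) - 1) ((i+1+1:ℕ)))
        = (-1:ℚ)^p * ((-1:ℚ)^i * ((p.choose i : ℕ) : ℚ) * ((((x+1)+i).choose (i+2) : ℕ) : ℚ)) := by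
      intro i hi
      rw [Finset.mem_range] at hi
      have e1 : p + 2 - (i+1+1) = p - i := by omega
      have e2 : (((i+1+1:ℕ) : ℤ) - 2) = (i : ℤ) := by push_cast; ring
      have e3 : ((x : ℤ) + ((i+1+1:ℕ):ℤ) - 1) = (((x+1)+i : ℕ) : ℤ) := by push_cast; ring
      have e4 : ((i+1+1:ℕ) : ℤ) = (((i+2 : ℕ)) : ℤ) := by push_cast; ring
      rw [e1, e3]
      rw [show ((i+1+1 : ℕ) : ℤ) - 2 = (i : ℤ) from e2]
      rw [show (i+1+1 : ℕ) = (i+2 : ℕ) from rfl]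
      rw [cc_natCast, cc_natCast, neg_one_pow_sub p i (by omega)]
      ring
    rw [Finset.sum_congr rfl hterm, ← Finset.mul_sum, key p (x+1) 2]
    rw [← mul_assoc, ← pow_add]
    have e : p + p = 2 * p := by ring
    rw [e, pow_mul]
    norm_num
  rw [hS1, hS2]
  have hx2 : x = (p+1)*q + (p+1) := by rw [hx]; ring
  have r2 : (p + 2 - 1) * (q + 1 - 1) + (p + 2) - 1 = x := by
    rw [show p + 2 - 1 = p + 1 from rfl, show q + 1 - 1 = q from rfl]
    have e : (p+1)*q + (p + 2) - 1 = (p+1)*q + (p+1) := by omega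
    rw [e, hx]; ring
  have r1 : (p + 2 - 1) * (q + 1 - 1) + (p + 2) = x + 1 := by
    rw [show p + 2 - 1 = p + 1 from rfl, show q + 1 - 1 = q from rfl]
    rw [hx]; ring
  rw [r2, r1]
  ring
end
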